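/- For q an odd prime power, the product of all a ∈ F_q^× such that a+1 is a nonzero square in F_q equals (-1)^((q-1)/2) / 2, and this set has cardinality (q-3)/2. -/

import Mathlib

open scoped Classical

open Finset Polynomial in
/-- The product of all `a ∈ F_q^×` with `a+1` a nonzero square is `(-1)^((q-1)/2)/2`,
and there are `(q-3)/2` such elements. -/
theorem prod_S1_plus (F : Type*) [Field F] [Fintype F] (q : ℕ)
    (hq : Fintype.card F = q) (hodd : Odd q) :
    (∏ a ∈ Finset.univ.filter (fun a : F => a ≠ 0 ∧ a + 1 ≠ 0 ∧ IsSquare (a + 1)), a)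
      = (-1 : F) ^ ((q - 1) / 2) / 2 ∧
    (Finset.univ.filter (fun a : F => a ≠ 0 ∧ a + 1 ≠ 0 ∧ IsSquare (a + 1))).card
      = (q - 3) / 2 := by
  classical
  have hq1 : 1 < q := hq ▸ Fintype.one_lt_card
  have hq3 : 3 ≤ q := by rcases hodd with ⟨k, hk⟩; omega
  set m := (q - 1) / 2 with hmdef
  have hm2 : 2 * m = q - 1 := by rcases hodd with ⟨k, hk⟩; omega
  have hm1 : 1 ≤ m := by omega
  have hmpos : 0 < m := hm1
  -- characteristic is not 2
  have hchar : ringChar F ≠ 2 := by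
    intro h
    have := FiniteField.even_card_iff_char_two.mp h
    rw [hq] at this
    rcases hodd with ⟨k, hk⟩; omega
  have h2 : (2 : F) ≠ 0 := Ring.two_ne_zero hchar
  -- a primitive m-th root of unity
  obtain ⟨g, hg⟩ := IsCyclic.exists_ofOrder_eq_natCard (α := Fˣ)
  have hgo : orderOf g = q - 1 := by
    rw [hg, Nat.card_eq_fintype_card, Fintype.card_units, hq]
  have hprimg : IsPrimitiveRoot (g : F) (q - 1) := by
    rw [IsPrimitiveRoot.coe_units_iff]
    exact hgo ▸ IsPrimitiveRoot.orderOf g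
  set ζ : F := (g : F) ^ 2 with hζdef
  have hprim : IsPrimitiveRoot ζ m := hprimg.pow (by omega) (by omega)
  -- describe the set
  set S := Finset.univ.filter (fun a : F => a ≠ 0 ∧ a + 1 ≠ 0 ∧ IsSquare (a + 1)) with hSdef
  set T := (nthRootsFinset m (1 : F)).erase 1 with hTdef
  have hsq : ∀ b : F, b ≠ 0 → (IsSquare b ↔ b ^ m = 1) := by
    intro b hb
    rw [FiniteField.isSquare_iff hchar hb, hq]
    constructor
    · intro h; rw [show m = q / 2 by omega]; exact h
    · intro h; rw [show q / 2 = m by omega]; exact h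
  have hST : S = T.image (fun b => b - 1) := by
    ext a
    simp only [hSdef, hTdef, Finset.mem_filter, Finset.mem_univ, true_and,
      Finset.mem_image, Finset.mem_erase, Polynomial.mem_nthRootsFinset hmpos (1 : F)]
    constructor
    · rintro ⟨ha, hb, hs⟩
      exact ⟨a + 1, ⟨by intro h; apply ha; linear_combination h, (hsq _ hb).mp hs⟩,
        by ring⟩
    · rintro ⟨b, ⟨hb1, hbm⟩, rfl⟩
      have hb0 : b ≠ 0 := by rintro rfl; simp [zero_pow hmpos.ne'] at hbm
      refine ⟨by intro h; apply hb1; linear_combination h, ?_, ?_⟩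
      · rw [show b - 1 + 1 = b by ring]; exact hb0
      · rw [show b - 1 + 1 = b by ring]; exact (hsq _ hb0).mpr hbm
  -- T is the set of nontrivial powers of ζ
  set n := m - 1 with hndef
  have hmn : m = n + 1 := by omega
  have hone : (1 : F) ∈ nthRootsFinset m (1 : F) :=
    (Polynomial.mem_nthRootsFinset hmpos (1 : F)).mpr (one_pow m)
  have hcardT : T.card = n := by
    rw [hTdef, Finset.card_erase_of_mem hone, hprim.card_nthRootsFinset]
  have hinj : Set.InjOn (fun k => ζ ^ (k + 1)) (Finset.range n) := by
    intro i hi j hj hij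
    simp only [Finset.coe_range, Set.mem_Iio] at hi hj
    have := hprim.pow_inj (i := i + 1) (j := j + 1) (by omega) (by omega) hij
    omega
  have himg : (Finset.range n).image (fun k => ζ ^ (k + 1)) = T := by
    apply Finset.eq_of_subset_of_card_le
    · intro x hx
      simp only [Finset.mem_image, Finset.mem_range] at hx
      obtain ⟨k, hk, rfl⟩ := hx
      rw [hTdef, Finset.mem_erase, Polynomial.mem_nthRootsFinset hmpos (1 : F)]
      refine ⟨hprim.pow_ne_one_of_pos_of_lt (Nat.succ_ne_zero k) (by omega), ?_⟩
      rw [← pow_mul, mul_comm, pow_mul, hprim.pow_eq_one, one_pow]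
    · rw [hcardT, Finset.card_image_of_injOn hinj, Finset.card_range]
  have hinj2 : Set.InjOn (fun b : F => b - 1) T := by
    intro x _ y _ h; simpa [sub_left_inj] using h
  -- the product
  have hprodT : ∏ b ∈ T, (b - 1) = ∏ k ∈ Finset.range n, (ζ ^ (k + 1) - 1) := by
    rw [← himg, Finset.prod_image hinj]
  have hkey : (-1 : F) ^ n * ∏ k ∈ Finset.range n, (ζ ^ (k + 1) - 1) = (n : F) + 1 := by
    have := (hmn ▸ hprim : IsPrimitiveRoot ζ (n + 1))
    exact_mod_cast this.prod_pow_sub_one_eq_order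
  -- (m : F) = -1/2
  have hcast : ((q : ℕ) : F) = 0 := by rw [← hq]; exact Nat.cast_card_eq_zero F
  have hmF : (2 : F) * ((n : F) + 1) = -1 := by
    have : ((2 * m : ℕ) : F) = ((q - 1 : ℕ) : F) := by rw [hm2]
    push_cast [Nat.cast_sub (by omega : 1 ≤ q)] at this
    rw [hcast] at this
    rw [show ((n : F) + 1) = (m : F) by rw [hmn]; push_cast; ring]
    rw [this]; ring
  have hnF : (n : F) + 1 = -(2⁻¹) := by
    field_simp at hmF ⊢
    linear_combination hmF
  constructor
  · rw [hST, Finset.prod_image hinj2]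
    have : ∏ b ∈ T, (b - 1) = (-1 : F) ^ n * ((n : F) + 1) := by
      rw [hprodT, ← hkey]
      rw [← mul_assoc, ← mul_pow]
      simp
    rw [this, hnF, hmn]
    rw [pow_succ]
    field_simp
  · rw [hST, Finset.card_image_of_injOn hinj2, hcardT]
    omega
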